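/- A power of a cycle C_n^k with n ≥ 3k + 2 and k ≥ 1 has biclique-chromatic number 2 if, and only if, there exist natural numbers a and b such that n = a·k + b·(k + 1) and a + b ≥ 2 is even. -/

import Mathlib

open SimpleGraph

/-- The `k`-th power of a path on `n` vertices: `v_i ~ v_j` iff `0 < |i - j| ≤ k`. -/
def pathPower (n k : ℕ) : SimpleGraph (Fin n) :=
  SimpleGraph.fromRel (fun i j => i.val ≤ j.val ∧ j.val ≤ i.val + k)

/-- The cyclic distance between two vertices of `ZMod n`. -/
def cdist (n : ℕ) (i j : ZMod n) : ℕ := min (i - j).val (j - i).val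

/-- The `k`-th power of a cycle on `n` vertices: `v_i ~ v_j` iff the
cyclic distance between `i` and `j` is between `1` and `k`. -/
def cyclePower (n k : ℕ) : SimpleGraph (ZMod n) :=
  SimpleGraph.fromRel (fun i j => cdist n i j ≤ k)

/-- `S` induces a complete bipartite subgraph of `G`. -/
def IsCompleteBipartiteSet {V : Type*} (G : SimpleGraph V) (S : Set V) : Prop :=
  ∃ A B : Set V, A ∪ B = S ∧ Disjoint A B ∧
    (∀ a ∈ A, ∀ b ∈ B, G.Adj a b) ∧
    (∀ a ∈ A, ∀ a' ∈ A, ¬ G.Adj a a') ∧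
    (∀ b ∈ B, ∀ b' ∈ B, ¬ G.Adj b b')

/-- A biclique: a maximal set of vertices inducing a complete bipartite
subgraph with at least one edge. -/
def IsBiclique {V : Type*} (G : SimpleGraph V) (S : Set V) : Prop :=
  IsCompleteBipartiteSet G S ∧ (∃ u ∈ S, ∃ v ∈ S, G.Adj u v) ∧
  ∀ T : Set V, S ⊆ T → IsCompleteBipartiteSet G T → T = S

/-- A set is monochromatic under a colouring. -/
def Monochromatic {V α : Type*} (c : V → α) (S : Set V) : Prop :=
  ∃ a, ∀ v ∈ S, c v = a

/-- `G` admits a biclique-colouring with `m` colours. -/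
def BicliqueColorable {V : Type*} (G : SimpleGraph V) (m : ℕ) : Prop :=
  ∃ c : V → Fin m, ∀ S : Set V, IsBiclique G S → ¬ Monochromatic c S

/-- The biclique-chromatic number. -/
noncomputable def bicliqueChromaticNumber {V : Type*} (G : SimpleGraph V) : ℕ :=
  sInf {m | BicliqueColorable G m}

/-- `a`, `b`, `c` induce a path on three vertices (with middle vertex `b`). -/
def IsInducedP3 {V : Type*} (G : SimpleGraph V) (a b c : V) : Prop :=
  a ≠ b ∧ b ≠ c ∧ a ≠ c ∧ G.Adj a b ∧ G.Adj b c ∧ ¬ G.Adj a c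

/-- `a`, `b`, `c`, `d` induce a four-cycle (in this cyclic order). -/
def IsInducedC4 {V : Type*} (G : SimpleGraph V) (a b c d : V) : Prop :=
  a ≠ b ∧ a ≠ c ∧ a ≠ d ∧ b ≠ c ∧ b ≠ d ∧ c ≠ d ∧
  G.Adj a b ∧ G.Adj b c ∧ G.Adj c d ∧ G.Adj d a ∧ ¬ G.Adj a c ∧ ¬ G.Adj b d

section basics
variable {n k : ℕ} [NeZero n]

lemma cp_adj {u v : ZMod n} :
    (cyclePower n k).Adj u v ↔ (v - u).val ≠ 0 ∧ ((v - u).val ≤ k ∨ n - (v - u).val ≤ k) := by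
  constructor
  · rintro ⟨hne, h⟩
    have hvu : v - u ≠ 0 := fun h0 => hne (by
      have := sub_eq_zero.mp h0; exact this.symm)
    have hval : (v - u).val ≠ 0 := fun h0 => hvu (ZMod.val_eq_zero _ |>.mp h0)
    refine ⟨hval, ?_⟩
    have hneg : (u - v).val = n - (v - u).val := by
      have : u - v = -(v - u) := by ring
      rw [this, ZMod.neg_val]
      simp [hvu]
    rcases h with h | h <;> unfold cdist at h <;> omega
  · rintro ⟨hval, h⟩
    have hvu : v - u ≠ 0 := fun h0 => hval (by simp [h0])
    have hneg : (u - v).val = n - (v - u).val := by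
      have : u - v = -(v - u) := by ring
      rw [this, ZMod.neg_val]; simp [hvu]
    refine ⟨fun he => hvu (by simp [he]), ?_⟩
    left; unfold cdist; omega

lemma add_natCast_eq (x : ZMod n) (w : ZMod n) : x + (((w - x).val : ℕ) : ZMod n) = w := by
  rw [ZMod.natCast_val, ZMod.cast_id]; ring

lemma diff_val_le (x : ZMod n) {e f : ℕ} (he : e < n) (hfe : f ≤ e) :
    ((x + (e : ℕ)) - (x + (f : ℕ))).val = e - f := by
  have : (x + (e : ℕ)) - (x + (f : ℕ)) = (((e - f : ℕ) : ℕ) : ZMod n) := by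
    push_cast [Nat.cast_sub hfe]; ring
  rw [this, ZMod.val_natCast, Nat.mod_eq_of_lt (by omega)]

lemma diff_val_gt (x : ZMod n) {e f : ℕ} (hf : f < n) (hfe : e < f) :
    ((x + (e : ℕ)) - (x + (f : ℕ))).val = n - (f - e) := by
  have : (x + (e : ℕ)) - (x + (f : ℕ)) = (((n - (f - e) : ℕ) : ℕ) : ZMod n) := by
    push_cast [Nat.cast_sub (by omega : f - e ≤ n), Nat.cast_sub (le_of_lt hfe)]
    rw [ZMod.natCast_self]; ring
  rw [this, ZMod.val_natCast, Nat.mod_eq_of_lt (by omega)]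

/-- cyclic difference, in ℕ -/
def cD (n e f : ℕ) : ℕ := if f ≤ e then e - f else n - (f - e)

lemma adjN (x : ZMod n) {e f : ℕ} (he : e < n) (hf : f < n) :
    (cyclePower n k).Adj (x + (f : ℕ)) (x + (e : ℕ)) ↔
      (cD n e f ≠ 0 ∧ (cD n e f ≤ k ∨ n - cD n e f ≤ k)) := by
  rw [cp_adj]
  unfold cD
  rcases le_or_gt f e with hfe | hfe
  · rw [if_pos hfe, diff_val_le x he hfe]
  · rw [if_neg (by omega), diff_val_gt x hf hfe]

lemma eqN (x : ZMod n) {e f : ℕ} (he : e < n) (hf : f < n) :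
    (x + (e : ℕ)) = (x + (f : ℕ)) ↔ e = f := by
  constructor
  · intro h
    have h2 : ((e : ZMod n)) = (f : ZMod n) := by
      have := add_left_cancel h; exact this
    have := congrArg ZMod.val h2
    rwa [ZMod.val_natCast, ZMod.val_natCast, Nat.mod_eq_of_lt he, Nat.mod_eq_of_lt hf] at this
  · rintro rfl; rfl

end basics
section more
variable {n k : ℕ} [NeZero n]
lemma val_add_nat {n : ℕ} [NeZero n] (x : ZMod n) {e : ℕ} (he : e < n) :
    ((x + (e : ℕ)) - x).val = e := by
  have : (x + (e : ℕ)) - x = ((e : ℕ) : ZMod n) := by ring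
  rw [this, ZMod.val_natCast, Nat.mod_eq_of_lt he]

lemma adjN0 {n k : ℕ} [NeZero n] (x : ZMod n) {e : ℕ} (he : e < n) :
    (cyclePower n k).Adj x (x + (e : ℕ)) ↔ (e ≠ 0 ∧ (e ≤ k ∨ n - e ≤ k)) := by
  rw [cp_adj, val_add_nat x he]

lemma p3_biclique (hk : 1 ≤ k) (hn : 3 * k + 2 ≤ n) (x : ZMod n) {d s : ℕ}
    (hd1 : k + 1 ≤ d) (hd2 : d + 2 * k + 1 ≤ n) (hs1 : d ≤ s + k) (hs2 : s ≤ k) :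
    IsBiclique (cyclePower n k) {x, x + (s : ℕ), x + (d : ℕ)} := by
  have hx0 : x = x + ((0 : ℕ) : ZMod n) := by simp
  have h0n : (0:ℕ) < n := by omega
  have hsn : s < n := by omega
  have hdn : d < n := by omega
  have hs0 : 1 ≤ s := by omega
  have adj_xs : (cyclePower n k).Adj x (x + (s : ℕ)) := by
    rw [adjN0 x hsn]; omega
  have adj_sd : (cyclePower n k).Adj (x + (s : ℕ)) (x + (d : ℕ)) := by
    rw [adjN x hdn hsn]; unfold cD; split_ifs <;> omega
  have nadj_xd : ¬ (cyclePower n k).Adj x (x + (d : ℕ)) := by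
    rw [adjN0 x hdn]; omega
  refine ⟨⟨{x, x + (d:ℕ)}, {x + (s:ℕ)}, ?_, ?_, ?_, ?_, ?_⟩, ?_, ?_⟩
  · ext w; simp only [Set.mem_union, Set.mem_insert_iff, Set.mem_singleton_iff]; tauto
  · rw [Set.disjoint_left]
    rintro a ha hb
    simp only [Set.mem_insert_iff, Set.mem_singleton_iff] at ha hb
    subst hb
    rcases ha with h | h
    · exact adj_xs.ne h.symm
    · exact adj_sd.ne h

  · rintro a (rfl | rfl) b rfl
    · exact adj_xs
    · exact adj_sd.symm
  · rintro a (rfl | rfl) a' (rfl | rfl)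
    · exact (cyclePower n k).irrefl
    · exact nadj_xd
    · exact fun hh => nadj_xd hh.symm
    · exact (cyclePower n k).irrefl
  · rintro b rfl b' rfl; exact (cyclePower n k).irrefl
  · exact ⟨x, by simp, x + (s:ℕ), by simp, adj_xs⟩
  · -- maximality
    intro T hST hT
    obtain ⟨A, B, hun, hdis, hcomp, hiA, hiB⟩ := hT
    have key : ∀ (A B : Set (ZMod n)), A ∪ B = T →
        (∀ a ∈ A, ∀ b ∈ B, (cyclePower n k).Adj a b) →
        (∀ a ∈ A, ∀ a' ∈ A, ¬ (cyclePower n k).Adj a a') →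
        (∀ b ∈ B, ∀ b' ∈ B, ¬ (cyclePower n k).Adj b b') →
        x ∈ A → T ⊆ {x, x + (s:ℕ), x + (d:ℕ)} := by
      intro A B hun hcomp hiA hiB hxA
      -- locate x+s and x+d
      have hsT : x + (s:ℕ) ∈ T := hST (by simp)
      have hdT : x + (d:ℕ) ∈ T := hST (by simp)
      have hsB : x + (s:ℕ) ∈ B := by
        rcases (hun ▸ hsT : x + (s:ℕ) ∈ A ∪ B) with hA | hB
        · exact absurd adj_xs (hiA x hxA _ hA)
        · exact hB
      have hdA : x + (d:ℕ) ∈ A := by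
        rcases (hun ▸ hdT : x + (d:ℕ) ∈ A ∪ B) with hA | hB
        · exact hA
        · exact absurd adj_sd (hiB _ hsB _ hB)
      intro w hwT
      obtain ⟨e, he, hwe⟩ : ∃ e, e < n ∧ w = x + (e : ℕ) :=
        ⟨(w - x).val, ZMod.val_lt _, (add_natCast_eq x w).symm⟩
      rcases (hun ▸ hwT : w ∈ A ∪ B) with hwA | hwB
      · have h1 : ¬ (cyclePower n k).Adj x w := hiA x hxA w hwA
        have h2 : ¬ (cyclePower n k).Adj (x + (d:ℕ)) w := hiA _ hdA w hwA
        have h3 : (cyclePower n k).Adj w (x + (s:ℕ)) := hcomp w hwA _ hsB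
        rw [hwe, adjN0 x he] at h1
        rw [hwe, adjN x he hdn] at h2
        have h3' : (cyclePower n k).Adj (x + (e:ℕ)) (x + (s:ℕ)) := by rw [← hwe]; exact h3
        rw [adjN x hsn he] at h3'
        have : e = 0 ∨ e = d := by
          unfold cD at h2 h3'; split_ifs at h2 h3' <;> omega
        rcases this with rfl | rfl
        · rw [hwe, ← hx0]; simp
        · rw [hwe]; simp
      · have h1 : (cyclePower n k).Adj x w := hcomp x hxA w hwB
        have h2 : (cyclePower n k).Adj (x + (d:ℕ)) w := hcomp _ hdA w hwB
        have h3 : ¬ (cyclePower n k).Adj w (x + (s:ℕ)) := hiB w hwB _ hsB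
        rw [hwe, adjN0 x he] at h1
        rw [hwe, adjN x he hdn] at h2
        have h3' : ¬ (cyclePower n k).Adj (x + (e:ℕ)) (x + (s:ℕ)) := by rw [← hwe]; exact h3
        rw [adjN x hsn he] at h3'
        have : e = s := by
          unfold cD at h2 h3'; split_ifs at h2 h3' <;> omega
        rw [hwe, this]; simp
    have hxT : x ∈ T := hST (by simp)
    rcases (hun ▸ hxT : x ∈ A ∪ B) with hxA | hxB
    · exact Set.Subset.antisymm (key A B hun hcomp hiA hiB hxA) hST
    · refine Set.Subset.antisymm (key B A ?_ ?_ hiB hiA hxB) hST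
      · rw [Set.union_comm]; exact hun
      · exact fun b hb a ha => (hcomp a ha b hb).symm
end more

section c4
variable {n k : ℕ} [NeZero n]
lemma c4_biclique (hk2 : 2 ≤ k) (hn32 : n = 3 * k + 2) (x : ZMod n) :
    IsBiclique (cyclePower n k) {x, x + (2 : ℕ), x + (k + 2 : ℕ), x + (2 * k + 2 : ℕ)} := by
  have h2n : (2:ℕ) < n := by omega
  have hk2n : k + 2 < n := by omega
  have h2k2n : 2 * k + 2 < n := by omega
  have adj1 : (cyclePower n k).Adj x (x + (2:ℕ)) := by rw [adjN0 x h2n]; omega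
  have adj2 : (cyclePower n k).Adj (x + (2:ℕ)) (x + (k+2:ℕ)) := by
    rw [adjN x hk2n h2n]; unfold cD; split_ifs <;> omega
  have adj3 : (cyclePower n k).Adj (x + (k+2:ℕ)) (x + (2*k+2:ℕ)) := by
    rw [adjN x h2k2n hk2n]; unfold cD; split_ifs <;> omega
  have adj4 : (cyclePower n k).Adj x (x + (2*k+2:ℕ)) := by rw [adjN0 x h2k2n]; omega
  have nadj1 : ¬ (cyclePower n k).Adj x (x + (k+2:ℕ)) := by rw [adjN0 x hk2n]; omega
  have nadj2 : ¬ (cyclePower n k).Adj (x + (2:ℕ)) (x + (2*k+2:ℕ)) := by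
    rw [adjN x h2k2n h2n]; unfold cD; split_ifs <;> omega
  refine ⟨⟨{x, x + (k+2:ℕ)}, {x + (2:ℕ), x + (2*k+2:ℕ)}, ?_, ?_, ?_, ?_, ?_⟩, ?_, ?_⟩
  · ext w; simp only [Set.mem_union, Set.mem_insert_iff, Set.mem_singleton_iff]; tauto
  · rw [Set.disjoint_left]
    rintro a ha hb
    simp only [Set.mem_insert_iff, Set.mem_singleton_iff] at ha hb
    rcases ha with rfl | h
    · rcases hb with h | h
      · exact adj1.ne h
      · exact adj4.ne h
    · subst h
      rcases hb with h | h
      · exact adj2.ne h.symm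
      · exact adj3.ne h
  · rintro a (rfl | rfl) b (rfl | rfl)
    · exact adj1
    · exact adj4
    · exact adj2.symm
    · exact adj3
  · rintro a (rfl | rfl) a' (rfl | rfl)
    · exact (cyclePower n k).irrefl
    · exact nadj1
    · exact fun hh => nadj1 hh.symm
    · exact (cyclePower n k).irrefl
  · rintro b (rfl | rfl) b' (rfl | rfl)
    · exact (cyclePower n k).irrefl
    · exact nadj2
    · exact fun hh => nadj2 hh.symm
    · exact (cyclePower n k).irrefl
  · exact ⟨x, by simp, x + (2:ℕ), by simp, adj1⟩
  · intro T hST hT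
    obtain ⟨A, B, hun, hdis, hcomp, hiA, hiB⟩ := hT
    have key : ∀ (A B : Set (ZMod n)), A ∪ B = T →
        (∀ a ∈ A, ∀ b ∈ B, (cyclePower n k).Adj a b) →
        (∀ a ∈ A, ∀ a' ∈ A, ¬ (cyclePower n k).Adj a a') →
        (∀ b ∈ B, ∀ b' ∈ B, ¬ (cyclePower n k).Adj b b') →
        x ∈ A → T ⊆ {x, x + (2:ℕ), x + (k+2:ℕ), x + (2*k+2:ℕ)} := by
      intro A B hun hcomp hiA hiB hxA
      have h2T : x + (2:ℕ) ∈ T := hST (by simp)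
      have hkT : x + (k+2:ℕ) ∈ T := hST (by simp)
      have h2kT : x + (2*k+2:ℕ) ∈ T := hST (by simp)
      have h2B : x + (2:ℕ) ∈ B := by
        rcases (hun ▸ h2T : x + (2:ℕ) ∈ A ∪ B) with hA | hB
        · exact absurd adj1 (hiA x hxA _ hA)
        · exact hB
      have hkA : x + (k+2:ℕ) ∈ A := by
        rcases (hun ▸ hkT : x + (k+2:ℕ) ∈ A ∪ B) with hA | hB
        · exact hA
        · exact absurd adj2 (hiB _ h2B _ hB)
      have h2kB : x + (2*k+2:ℕ) ∈ B := by
        rcases (hun ▸ h2kT : x + (2*k+2:ℕ) ∈ A ∪ B) with hA | hB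
        · exact absurd adj4 (hiA x hxA _ hA)
        · exact hB
      intro w hwT
      obtain ⟨e, he, hwe⟩ : ∃ e, e < n ∧ w = x + (e : ℕ) :=
        ⟨(w - x).val, ZMod.val_lt _, (add_natCast_eq x w).symm⟩
      rcases (hun ▸ hwT : w ∈ A ∪ B) with hwA | hwB
      · have h1 : ¬ (cyclePower n k).Adj x w := hiA x hxA w hwA
        have h2 : ¬ (cyclePower n k).Adj (x + (k+2:ℕ)) w := hiA _ hkA w hwA
        have h3 : (cyclePower n k).Adj w (x + (2:ℕ)) := hcomp w hwA _ h2B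
        have h4 : (cyclePower n k).Adj w (x + (2*k+2:ℕ)) := hcomp w hwA _ h2kB
        rw [hwe, adjN0 x he] at h1
        rw [hwe, adjN x he hk2n] at h2
        have h3' : (cyclePower n k).Adj (x + (e:ℕ)) (x + (2:ℕ)) := by rw [← hwe]; exact h3
        rw [adjN x h2n he] at h3'
        have h4' : (cyclePower n k).Adj (x + (e:ℕ)) (x + (2*k+2:ℕ)) := by rw [← hwe]; exact h4
        rw [adjN x h2k2n he] at h4'
        have : e = 0 ∨ e = k + 2 := by
          unfold cD at h2 h3' h4'; split_ifs at h2 h3' h4' <;> omega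
        rcases this with rfl | rfl
        · rw [hwe]; simp
        · rw [hwe]; simp
      · have h1 : (cyclePower n k).Adj x w := hcomp x hxA w hwB
        have h2 : (cyclePower n k).Adj (x + (k+2:ℕ)) w := hcomp _ hkA w hwB
        have h3 : ¬ (cyclePower n k).Adj w (x + (2:ℕ)) := hiB w hwB _ h2B
        have h4 : ¬ (cyclePower n k).Adj w (x + (2*k+2:ℕ)) := hiB w hwB _ h2kB
        rw [hwe, adjN0 x he] at h1
        rw [hwe, adjN x he hk2n] at h2
        have h3' : ¬ (cyclePower n k).Adj (x + (e:ℕ)) (x + (2:ℕ)) := by rw [← hwe]; exact h3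
        rw [adjN x h2n he] at h3'
        have h4' : ¬ (cyclePower n k).Adj (x + (e:ℕ)) (x + (2*k+2:ℕ)) := by rw [← hwe]; exact h4
        rw [adjN x h2k2n he] at h4'
        have : e = 2 ∨ e = 2 * k + 2 := by
          unfold cD at h2 h3' h4'; split_ifs at h2 h3' h4' <;> omega
        rcases this with rfl | rfl
        · rw [hwe]; simp
        · rw [hwe]; simp
    have hxT : x ∈ T := hST (by simp)
    rcases (hun ▸ hxT : x ∈ A ∪ B) with hxA | hxB
    · exact Set.Subset.antisymm (key A B hun hcomp hiA hiB hxA) hST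
    · refine Set.Subset.antisymm (key B A ?_ ?_ hiB hiA hxB) hST
      · rw [Set.union_comm]; exact hun
      · exact fun b hb a ha => (hcomp a ha b hb).symm
end c4

section nat_lemmas
variable {n k m : ℕ}

lemma gap_lemma (hn : 0 < n) (hkm : k * m ≤ n) {p q : ℕ} (hpq : p ≤ q)
    (hidx : p * m / n + 2 ≤ q * m / n) : p + k + 1 ≤ q := by
  have hd1 := Nat.div_add_mod (p * m) n
  have hd2 : (p * m) % n < n := Nat.mod_lt _ hn
  have h2 : n * (q * m / n) ≤ q * m := Nat.mul_div_le (q * m) n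
  have h3 : n * (p * m / n + 2) ≤ n * (q * m / n) := Nat.mul_le_mul_left n hidx
  have key : p * m + n < q * m := by
    have : n * (p * m / n + 2) = n * (p * m / n) + 2 * n := by ring
    omega
  by_contra hq
  have hq' : q ≤ p + k := by omega
  have : q * m ≤ (p + k) * m := Nat.mul_le_mul_right m hq'
  have : (p + k) * m = p * m + k * m := by ring
  omega

lemma width_lemma (hn : 0 < n) (hnk : n ≤ m * (k + 1)) {p q : ℕ} (hpq : p ≤ q)
    (hidx : p * m / n = q * m / n) : q ≤ p + k := by
  by_contra hq
  have hq' : p + (k + 1) ≤ q := by omega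
  have h1 : (p + (k+1)) * m ≤ q * m := Nat.mul_le_mul_right m hq'
  have h2 : (p + (k+1)) * m = p * m + (k+1) * m := by ring
  have h3 : n ≤ (k+1) * m := by rw [mul_comm] at hnk; exact hnk
  have h4 : p * m + n ≤ q * m := by omega
  have h5 : (p * m + n) / n ≤ q * m / n := Nat.div_le_div_right h4
  rw [Nat.add_div_right _ hn] at h5
  omega

lemma idx_lt (hn : 0 < n) (hm : 0 < m) {p : ℕ} (hp : p < n) : p * m / n < m := by
  rw [Nat.div_lt_iff_lt_mul hn]
  exact ((Nat.mul_lt_mul_right hm).mpr hp).trans_le (le_of_eq (mul_comm n m))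

lemma idx_shift (hn : 0 < n) (p : ℕ) : (p + n) * m / n = p * m / n + m := by
  have : (p + n) * m = p * m + n * m := by ring
  rw [this, Nat.add_mul_div_left _ _ hn]

end nat_lemmas

section coloring
variable {n k : ℕ} [NeZero n]

/-- the block colouring -/
def col (n m : ℕ) (x : ZMod n) : Fin 2 := ⟨x.val * m / n % 2, by omega⟩

lemma natCast_val_self (u : ZMod n) : ((u.val : ℕ) : ZMod n) = u := by
  rw [ZMod.natCast_val, ZMod.cast_id]

lemma val_sub_chi (u v : ZMod n) :
    (v - u).val = (v.val - u.val) + (if u.val ≤ v.val then 0 else n - (u.val - v.val)) := by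
  have hu : u = (0 : ZMod n) + ((u.val : ℕ) : ZMod n) := by rw [natCast_val_self]; ring
  have hv : v = (0 : ZMod n) + ((v.val : ℕ) : ZMod n) := by rw [natCast_val_self]; ring
  rcases le_or_gt u.val v.val with h | h
  · rw [if_pos h]
    nth_rewrite 1 [hu, hv]
    rw [diff_val_le (0 : ZMod n) (ZMod.val_lt v) h]; omega
  · rw [if_neg (by omega)]
    nth_rewrite 1 [hu, hv]
    rw [diff_val_gt (0 : ZMod n) (ZMod.val_lt u) h]; omega

variable {m : ℕ}

lemma core_same_idx (hn : 0 < n) (hm : 0 < m) (hme : Even m) (hkm : k * m ≤ n)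
    (hnk : n ≤ m * (k + 1))
    {p q : ℕ} (hp : p < n) (hq : q < n) (hpq : p ≤ q)
    (hpar : p * m / n % 2 = q * m / n % 2)
    (hadj : (q - p) + (p - q) ≠ 0 ∧ ((q - p) + (p - q) ≤ k ∨ n - ((q - p) + (p - q)) ≤ k)) :
    p * m / n = q * m / n := by
  obtain ⟨hne, hcase⟩ := hadj
  have hmono : p * m / n ≤ q * m / n := Nat.div_le_div_right (Nat.mul_le_mul_right m hpq)
  have hδ : (q - p) + (p - q) = q - p := by omega
  rw [hδ] at hne hcase
  rcases hcase with hle | hwrap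
  · -- no wrap
    have hng : ¬ (p * m / n + 2 ≤ q * m / n) := fun hc => by
      have := gap_lemma hn hkm hpq hc; omega
    generalize p * m / n = ip at hng hpar hmono
    generalize q * m / n = iq at hng hpar hmono
    omega
  · -- wrap: contradiction
    exfalso
    have hq' : q ≤ p + n := by omega
    have hshift : (p + n) * m / n = p * m / n + m := idx_shift hn p
    have hgap : ¬ (q * m / n + 2 ≤ (p + n) * m / n) := fun hc => by
      have := gap_lemma hn hkm hq' hc; omega
    rw [hshift] at hgap
    have hlt : q * m / n < m := idx_lt hn hm hq
    obtain ⟨m2, hm2⟩ := hme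
    generalize p * m / n = ip at hgap hpar hmono
    generalize q * m / n = iq at hgap hpar hmono hlt
    omega

lemma adj_same_col (hn32 : 3 * k + 2 ≤ n) (hm : 0 < m) (hme : Even m) (hkm : k * m ≤ n)
    (hnk : n ≤ m * (k + 1)) {u v : ZMod n} (hadj : (cyclePower n k).Adj u v)
    (hcol : col n m u = col n m v) : u.val * m / n = v.val * m / n := by
  have hn : 0 < n := by omega
  rw [cp_adj] at hadj
  have hsub := val_sub_chi u v
  have hpar : u.val * m / n % 2 = v.val * m / n % 2 := by
    have := congrArg Fin.val hcol
    simpa [col] using this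
  have hp := ZMod.val_lt u
  have hq := ZMod.val_lt v
  have hδ : ((v.val - u.val) + (u.val - v.val) ≠ 0) ∧
      (((v.val - u.val) + (u.val - v.val)) ≤ k ∨ n - ((v.val - u.val) + (u.val - v.val)) ≤ k) := by
    split_ifs at hsub <;> omega
  rcases le_total u.val v.val with h | h
  · exact core_same_idx hn hm hme hkm hnk hp hq h hpar hδ
  · refine (core_same_idx hn hm hme hkm hnk hq hp h hpar.symm ?_).symm
    constructor
    · omega
    · rcases hδ.2 with h1 | h1
      · left; omega
      · right; omega

lemma same_idx_adj (hn32 : 3 * k + 2 ≤ n) (hk : 1 ≤ k) (hm : 0 < m) (hnk : n ≤ m * (k + 1))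
    {u v : ZMod n} (hne : u ≠ v) (hidx : u.val * m / n = v.val * m / n) :
    (cyclePower n k).Adj u v := by
  have hn : 0 < n := by omega
  have hpqne : u.val ≠ v.val := fun hc => hne (by
    rw [← natCast_val_self u, ← natCast_val_self v, hc])
  have hsub := val_sub_chi u v
  rw [cp_adj]
  rcases le_or_gt u.val v.val with h | h
  · have hw := width_lemma hn hnk h hidx
    split_ifs at hsub <;> omega
  · have hw := width_lemma hn hnk (le_of_lt h) hidx.symm
    have hvn := ZMod.val_lt u
    split_ifs at hsub <;> omega

end coloring
section colo
variable {n k m : ℕ} [NeZero n]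
lemma sub_val_neg {u v : ZMod n} (h : u ≠ v) : (u - v).val = n - (v - u).val := by
  have h1 : u - v = -(v - u) := by ring
  have h2 : v - u ≠ 0 := sub_ne_zero.mpr (Ne.symm h)
  rw [h1, ZMod.neg_val]; simp [h2]

lemma pair_extend (hk : 1 ≤ k) (hn : 3 * k + 2 ≤ n) {u v : ZMod n}
    (huv : (cyclePower n k).Adj u v) (hd : (v - u).val ≤ k) :
    ∃ T, {u, v} ⊆ T ∧ IsCompleteBipartiteSet (cyclePower n k) T ∧ T ≠ {u, v} := by
  obtain ⟨hd0, -⟩ := cp_adj.mp huv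
  have hdn : (v - u).val < n := ZMod.val_lt _
  have hkn : k + 1 < n := by omega
  have hveq : v = u + (((v - u).val : ℕ) : ZMod n) := (add_natCast_eq u v).symm
  set d := (v - u).val with hddef
  set w := u + ((k + 1 : ℕ) : ZMod n) with hwdef
  have adjwv : (cyclePower n k).Adj w v := by
    rw [hveq]
    have : (cyclePower n k).Adj (u + ((d:ℕ) : ZMod n)) (u + ((k+1 : ℕ) : ZMod n)) := by
      rw [adjN u hkn hdn]; unfold cD; split_ifs <;> omega
    exact this.symm
  have nadjuw : ¬ (cyclePower n k).Adj u w := by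
    rw [hwdef, adjN0 u hkn]; omega
  have hwu : w ≠ u := by
    intro hcon
    have := val_add_nat u hkn
    rw [← hwdef, hcon] at this; simp at this
  have hwv : w ≠ v := by
    intro hcon
    rw [hveq, hwdef] at hcon
    have h1 : ((k+1 : ℕ) : ZMod n) = ((d : ℕ) : ZMod n) := by
      exact add_left_cancel hcon
    have := congrArg ZMod.val h1
    rw [ZMod.val_natCast, ZMod.val_natCast, Nat.mod_eq_of_lt hkn, Nat.mod_eq_of_lt hdn] at this
    omega
  refine ⟨{u, v, w}, ?_, ⟨{u, w}, {v}, ?_, ?_, ?_, ?_, ?_⟩, ?_⟩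
  · intro z hz; simp only [Set.mem_insert_iff, Set.mem_singleton_iff] at hz ⊢; tauto
  · ext z; simp only [Set.mem_union, Set.mem_insert_iff, Set.mem_singleton_iff]; tauto
  · rw [Set.disjoint_left]
    rintro a (rfl | rfl) hb <;> simp only [Set.mem_singleton_iff] at hb
    · exact huv.ne hb
    · exact hwv hb
  · rintro a (rfl | rfl) b rfl
    · exact huv
    · exact adjwv
  · rintro a (rfl | rfl) a' (rfl | rfl)
    · exact (cyclePower n k).irrefl
    · exact nadjuw
    · exact fun hh => nadjuw hh.symm
    · exact (cyclePower n k).irrefl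
  · rintro b rfl b' rfl; exact (cyclePower n k).irrefl
  · intro hcon
    have hwmem : w ∈ ({u, v, w} : Set (ZMod n)) := by simp
    rw [hcon] at hwmem
    simp only [Set.mem_insert_iff, Set.mem_singleton_iff] at hwmem
    rcases hwmem with h | h
    · exact hwu h
    · exact hwv h

lemma two_colorable (hk : 1 ≤ k) (hn : 3 * k + 2 ≤ n) (hm2 : 2 ≤ m) (hme : Even m)
    (hkm : k * m ≤ n) (hnk : n ≤ m * (k + 1)) :
    BicliqueColorable (cyclePower n k) 2 := by
  have hm : 0 < m := by omega
  refine ⟨col n m, ?_⟩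
  rintro S ⟨hcbp, ⟨u, huS, v, hvS, huv⟩, hmax⟩ ⟨γ, hγ⟩
  obtain ⟨A, B, hun, hdis, hcomp, hiA, hiB⟩ := hcbp
  have key : ∀ A B : Set (ZMod n), A ∪ B = S →
      (∀ a ∈ A, ∀ b ∈ B, (cyclePower n k).Adj a b) →
      (∀ a ∈ A, ∀ a' ∈ A, ¬ (cyclePower n k).Adj a a') →
      (∀ b ∈ B, ∀ b' ∈ B, ¬ (cyclePower n k).Adj b b') →
      u ∈ A → v ∈ B → S = {u, v} := by
    intro A B hun hcomp hiA hiB huA hvB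
    have hcuv : col n m u = col n m v := by
      rw [hγ u huS, hγ v hvS]
    have hiuv : u.val * m / n = v.val * m / n := adj_same_col hn hm hme hkm hnk huv hcuv
    apply Set.Subset.antisymm
    · rw [← hun]
      rintro z (hzA | hzB)
      · left
        by_contra hne
        have hadj : (cyclePower n k).Adj z v := hcomp z hzA v hvB
        have hcz : col n m z = col n m v := by
          rw [hγ z (hun ▸ Set.mem_union_left B hzA), hγ v hvS]
        have hiz : z.val * m / n = v.val * m / n := adj_same_col hn hm hme hkm hnk hadj hcz
        exact hiA z hzA u huA (same_idx_adj hn hk hm hnk hne (by omega))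
      · right
        by_contra hne
        have hadj : (cyclePower n k).Adj u z := hcomp u huA z hzB
        have hcz : col n m z = col n m u := by
          rw [hγ z (hun ▸ Set.mem_union_right A hzB), hγ u huS]
        have hiz : z.val * m / n = u.val * m / n := adj_same_col hn hm hme hkm hnk hadj.symm hcz
        exact hiB z hzB v hvB (same_idx_adj hn hk hm hnk hne (by omega))
    · rintro z (rfl | rfl)
      · exact huS
      · exact hvS
  have hSuv : S = {u, v} := by
    rcases (hun ▸ huS : u ∈ A ∪ B) with huA | huB <;>
      rcases (hun ▸ hvS : v ∈ A ∪ B) with hvA | hvB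
    · exact absurd huv (hiA u huA v hvA)
    · exact key A B hun hcomp hiA hiB huA hvB
    · exact key B A (by rw [Set.union_comm]; exact hun)
        (fun b hb a ha => (hcomp a ha b hb).symm) hiB hiA huB hvA
    · exact absurd huv (hiB u huB v hvB)
  rcases (cp_adj.mp huv).2 with hle | hwrap
  · obtain ⟨T, hsub, hcbpT, hTne⟩ := pair_extend hk hn huv hle
    have := hmax T (by rw [hSuv]; exact hsub) hcbpT
    rw [hSuv] at this
    exact hTne this
  · have hd' : (u - v).val ≤ k := by
      rw [sub_val_neg huv.ne]
      omega
    obtain ⟨T, hsub, hcbpT, hTne⟩ := pair_extend hk hn huv.symm hd'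
    have := hmax T (by rw [hSuv, Set.pair_comm]; exact hsub) hcbpT
    rw [hSuv, Set.pair_comm u v] at this
    exact hTne this
end colo

lemma fin2_cases : ∀ a b r : Fin 2, a ≠ b → r = a ∨ r = b := by decide

def IsBd {n : ℕ} (c : ZMod n → Fin 2) (y : ZMod n) : Prop :=
  c (y + ((1 : ℕ) : ZMod n)) ≠ c y

instance {n : ℕ} (c : ZMod n → Fin 2) : DecidablePred (IsBd c) := fun y =>
  show Decidable (c (y + ((1 : ℕ) : ZMod n)) ≠ c y) from inferInstance

section runs
variable {n k : ℕ} [NeZero n]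

lemma add_nat_add (x : ZMod n) (a b : ℕ) :
    x + ((a + b : ℕ) : ZMod n) = (x + (a : ℕ)) + (b : ℕ) := by push_cast; ring

variable (hk : 1 ≤ k) (hn : 3 * k + 2 ≤ n) (c : ZMod n → Fin 2)
  (hc : ∀ S : Set (ZMod n), IsBiclique (cyclePower n k) S → ¬ Monochromatic c S)

include hk hn hc in
lemma good (x : ZMod n) {d s : ℕ} (hd1 : k + 1 ≤ d) (hd2 : d + 2 * k + 1 ≤ n)
    (hs1 : d ≤ s + k) (hs2 : s ≤ k)
    (h0 : c (x + (d : ℕ)) = c x) (h1 : c (x + (s : ℕ)) = c x) : False := by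
  refine hc _ (p3_biclique hk hn x hd1 hd2 hs1 hs2) ⟨c x, ?_⟩
  rintro v (rfl | rfl | rfl)
  · rfl
  · exact h1
  · exact h0

lemma const_of_no_bd (hall : ∀ y, ¬ IsBd c y) : ∀ (t : ℕ) (x : ZMod n),
    c (x + (t : ℕ)) = c x := by
  intro t
  induction t with
  | zero => intro x; simp
  | succ i ih =>
    intro x
    have h1 : x + ((i + 1 : ℕ) : ZMod n) = (x + (i : ℕ)) + ((1:ℕ) : ZMod n) :=
      add_nat_add x i 1
    rw [h1, not_not.mp (hall (x + (i : ℕ)))]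
    exact ih x

include hk hn hc in
lemma exists_bd : ∃ y, IsBd c y := by
  by_contra hall
  push_neg at hall
  have hconst := const_of_no_bd c hall
  exact good hk hn c hc 0 (le_refl (k+1)) (by omega) (by omega) (by omega)
    (hconst (k+1) 0) (hconst 1 0)

lemma gap_exists (hb : ∃ y, IsBd c y) (x : ZMod n) :
    ∃ t, 0 < t ∧ IsBd c (x + (t : ℕ)) := by
  obtain ⟨y, hy⟩ := hb
  by_cases hxy : y = x
  · exact ⟨n, NeZero.pos n, by rw [ZMod.natCast_self, add_zero]; exact hxy ▸ hy⟩
  · refine ⟨(y - x).val, ?_, by rw [add_natCast_eq]; exact hy⟩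
    have h0 : y - x ≠ 0 := sub_ne_zero.mpr hxy
    have h1 : (y - x).val ≠ 0 := fun hz => h0 ((ZMod.val_eq_zero _).mp hz)
    omega

/-- length of the run starting right after `x` -/
noncomputable def gp (hb : ∃ y, IsBd c y) (x : ZMod n) : ℕ := Nat.find (gap_exists c hb x)

lemma gp_pos (hb) (x : ZMod n) : 0 < gp c hb x := (Nat.find_spec (gap_exists c hb x)).1

lemma gp_bd (hb) (x : ZMod n) : IsBd c (x + (gp c hb x : ℕ)) :=
  (Nat.find_spec (gap_exists c hb x)).2

lemma gp_min (hb) (x : ZMod n) {t : ℕ} (h1 : 0 < t) (h2 : t < gp c hb x) :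
    ¬ IsBd c (x + (t : ℕ)) := fun hbd =>
  Nat.find_min (gap_exists c hb x) h2 ⟨h1, hbd⟩

lemma run_const (hb) (x : ZMod n) : ∀ j, 1 ≤ j → j ≤ gp c hb x →
    c (x + (j : ℕ)) = c (x + ((1:ℕ) : ZMod n)) := by
  intro j
  induction j with
  | zero => intro h _; exact absurd h (by omega)
  | succ i ih =>
    intro hj1 hjg
    rcases Nat.eq_or_lt_of_le hj1 with h1 | h1
    · rw [← h1]
    · have hi1 : 1 ≤ i := by omega
      have hig : i < gp c hb x := by omega
      have hnb := not_not.mp (gp_min c hb x (by omega) hig)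
      rw [add_nat_add x i 1, hnb]
      exact ih hi1 (by omega)

include hk hn hc in
lemma gap_le (hb) (x : ZMod n) : gp c hb x ≤ k + 1 := by
  by_contra hcon
  have h1 : c (x + ((k+2 : ℕ) : ZMod n)) = c (x + ((1:ℕ):ZMod n)) :=
    run_const c hb x (k+2) (by omega) (by omega)
  have h2 : c (x + ((2 : ℕ) : ZMod n)) = c (x + ((1:ℕ):ZMod n)) :=
    run_const c hb x 2 (by omega) (by omega)
  apply good hk hn c hc (x + ((1:ℕ) : ZMod n)) (le_refl (k+1)) (by omega)
    (by omega : k + 1 ≤ 1 + k) (by omega : 1 ≤ k)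
  · rw [← add_nat_add x 1 (k+1), (by omega : 1 + (k+1) = k+2)]
    exact h1
  · rw [← add_nat_add x 1 1, (by omega : 1 + 1 = 2)]
    exact h2

include hk hn hc in
lemma plf (hb) (x : ZMod n) (hx : IsBd c x) (hshort : gp c hb x ≤ k - 1) :
    c (x + ((k+1 : ℕ) : ZMod n)) = c (x + ((1:ℕ) : ZMod n)) := by
  by_contra hcon
  set r := gp c hb x with hrdef
  have hr1 : 1 ≤ r := gp_pos c hb x
  have hk2 : 2 ≤ k := by omega
  -- c (x + (k+1)) = c x
  have h0 : c (x + ((k+1 : ℕ) : ZMod n)) = c x := by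
    rcases fin2_cases (c (x + ((1:ℕ):ZMod n))) (c x) (c (x + ((k+1:ℕ):ZMod n))) hx with h | h
    · exact absurd h hcon
    · exact h
  -- c (x + (r+1)) = c x
  have hrun : c (x + (r : ℕ)) = c (x + ((1:ℕ):ZMod n)) := run_const c hb x r hr1 (le_refl r)
  have hbd : c ((x + (r:ℕ)) + ((1:ℕ):ZMod n)) ≠ c (x + (r:ℕ)) := gp_bd c hb x
  have h1 : c (x + ((r+1 : ℕ) : ZMod n)) = c x := by
    rw [add_nat_add x r 1]
    rcases fin2_cases (c (x + ((1:ℕ):ZMod n))) (c x) (c ((x + (r:ℕ)) + ((1:ℕ):ZMod n))) hx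
      with h | h
    · rw [← hrun] at h; exact absurd h hbd
    · exact h
  exact good hk hn c hc x (le_refl (k+1)) (by omega) (by omega : k+1 ≤ (r+1) + k)
    (by omega : r + 1 ≤ k) h0 h1

include hk hn hc in
lemma next_short (hb) (x : ZMod n) (hx : IsBd c x) (hshort : gp c hb x ≤ k - 1) :
    gp c hb (x + (gp c hb x : ℕ)) ≤ k - gp c hb x := by
  by_contra hcon
  set r := gp c hb x with hrdef
  have hr1 : 1 ≤ r := gp_pos c hb x
  set y := x + (r : ℕ) with hydef
  have hj : k + 1 - r ≤ gp c hb y := by omega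
  have hrc : c (y + ((k + 1 - r : ℕ) : ZMod n)) = c (y + ((1:ℕ):ZMod n)) :=
    run_const c hb y (k+1-r) (by omega) hj
  have hyk : y + ((k + 1 - r : ℕ) : ZMod n) = x + ((k+1 : ℕ) : ZMod n) := by
    rw [hydef, ← add_nat_add x r (k+1-r)]
    congr 1
    congr 1
    omega
  rw [hyk] at hrc
  have hplf := plf hk hn c hc hb x hx hshort
  have hbd : c (y + ((1:ℕ):ZMod n)) ≠ c y := gp_bd c hb x
  have hrun : c (x + (r : ℕ)) = c (x + ((1:ℕ):ZMod n)) := run_const c hb x r hr1 (le_refl r)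
  rw [hplf] at hrc
  rw [hydef] at hbd
  rw [hrun] at hbd
  exact hbd hrc.symm
include hk hn hc in
lemma all_short (hb : ∃ y, IsBd c y) {x₀ : ZMod n} (h0 : IsBd c x₀)
    (h0s : gp c hb x₀ ≤ k - 1) : ∀ z, IsBd c z → gp c hb z ≤ k - 1 := by
  suffices H : ∀ N, ∀ z, IsBd c z → (z - x₀).val = N → gp c hb z ≤ k - 1 by
    exact fun z hz => H _ z hz rfl
  intro N
  induction N using Nat.strong_induction_on with
  | _ N ih =>
    intro z hz hN
    by_cases hz0 : z = x₀
    · subst hz0; exact h0s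
    have hNpos : 0 < N := by
      have h0' : z - x₀ ≠ 0 := sub_ne_zero.mpr hz0
      have h1 : (z - x₀).val ≠ 0 := fun hzz => h0' ((ZMod.val_eq_zero _).mp hzz)
      omega
    have hNcast : ((N : ℕ) : ZMod n) = z - x₀ := by
      rw [← hN, ZMod.natCast_val, ZMod.cast_id]
    have hNn : N < n := by rw [← hN]; exact ZMod.val_lt _
    have hprev : ∃ t, 0 < t ∧ IsBd c (z - (t : ℕ)) := by
      refine ⟨N, hNpos, ?_⟩
      rw [hNcast]
      simpa using h0
    set t₀ := Nat.find hprev with ht₀def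
    obtain ⟨ht₀pos, ht₀bd⟩ := Nat.find_spec hprev
    have ht₀N : t₀ ≤ N := Nat.find_min' hprev ⟨hNpos, by rw [hNcast]; simpa using h0⟩
    set w := z - ((t₀ : ℕ) : ZMod n) with hwdef
    have hwbd : IsBd c w := ht₀bd
    have key1 : w + ((t₀ : ℕ) : ZMod n) = z := by rw [hwdef]; ring
    have hgw : gp c hb w = t₀ := by
      have hle : gp c hb w ≤ t₀ := Nat.find_min' (gap_exists c hb w)
        ⟨ht₀pos, by rw [key1]; exact hz⟩
      rcases Nat.eq_or_lt_of_le hle with h | h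
      · exact h
      · exfalso
        have hbd2 : IsBd c (w + ((gp c hb w : ℕ) : ZMod n)) := gp_bd c hb w
        have harith : w + ((gp c hb w : ℕ) : ZMod n) = z - (((t₀ - gp c hb w : ℕ) : ℕ) : ZMod n) := by
          rw [Nat.cast_sub (le_of_lt h), hwdef]
          ring
        rw [harith] at hbd2
        exact Nat.find_min hprev (show t₀ - gp c hb w < t₀ by
          have := gp_pos c hb w; omega) ⟨by have := gp_pos c hb w; omega, hbd2⟩
    have hwshort : gp c hb w ≤ k - 1 := by
      rcases Nat.eq_or_lt_of_le ht₀N with h | h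
      · -- t₀ = N, so w = x₀
        have : w = x₀ := by
          rw [hwdef, h, hNcast]; ring
        rw [this]; exact h0s
      · -- use ih
        have hwval : (w - x₀).val = N - t₀ := by
          have : w - x₀ = (((N - t₀ : ℕ) : ℕ) : ZMod n) := by
            rw [hwdef]
            push_cast [Nat.cast_sub ht₀N]
            rw [hNcast]
            ring
          rw [this, ZMod.val_natCast, Nat.mod_eq_of_lt (by omega)]
        exact ih (N - t₀) (by omega) w hwbd hwval
    have := next_short hk hn c hc hb w hwbd hwshort
    rw [hgw, key1] at this
    omega

include hk hn hc in
lemma antiper (hb : ∃ y, IsBd c y) (hex : ∃ x₀, IsBd c x₀ ∧ gp c hb x₀ ≤ k - 1) :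
    ∀ x, c (x + ((k+1 : ℕ) : ZMod n)) ≠ c x := by
  obtain ⟨x₀, h0, h0s⟩ := hex
  intro x heq
  have hmid : ∀ s, 1 ≤ s → s ≤ k → c (x + (s : ℕ)) ≠ c x := by
    intro s h1 h2 hcon
    exact good hk hn c hc x (le_refl (k+1)) (by omega) (by omega) h2 heq hcon
  have hxbd : IsBd c x := hmid 1 (le_refl 1) hk
  have hgx : gp c hb x ≤ k - 1 := all_short hk hn c hc hb h0 h0s x hxbd
  have hg1 : 1 ≤ gp c hb x := gp_pos c hb x
  have hbd : IsBd c (x + ((gp c hb x : ℕ) : ZMod n)) := gp_bd c hb x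
  have hA : c (x + ((gp c hb x : ℕ) : ZMod n)) ≠ c x := hmid _ hg1 (by omega)
  have hB : c (x + ((gp c hb x + 1 : ℕ) : ZMod n)) ≠ c x := hmid _ (by omega) (by omega)
  rw [add_nat_add x (gp c hb x) 1] at hB
  unfold IsBd at hbd
  rcases fin2_cases (c (x + ((1:ℕ):ZMod n))) (c x)
    (c ((x + ((gp c hb x : ℕ):ZMod n)) + ((1:ℕ):ZMod n))) hxbd with h1 | h1
  · rcases fin2_cases (c (x + ((1:ℕ):ZMod n))) (c x) (c (x + ((gp c hb x : ℕ):ZMod n))) hxbd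
      with h2 | h2
    · exact hbd (h1.trans h2.symm)
    · exact hA h2
  · exact hB h1

include hk hn hc in
lemma no_short (hb : ∃ y, IsBd c y) : ¬ ∃ x₀, IsBd c x₀ ∧ gp c hb x₀ ≤ k - 1 := by
  intro hex
  have hk2 : 2 ≤ k := by
    obtain ⟨x₀, h0, h0s⟩ := hex
    have := gp_pos c hb x₀
    omega
  have hap := antiper hk hn c hc hb hex
  obtain ⟨x₀, h0, h0s⟩ := hex
  rcases (by omega : n = 3 * k + 2 ∨ 3 * k + 3 ≤ n) with hn32 | hn33
  · -- n = 3k + 2 : periodicity argument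
    have h2per : ∀ x : ZMod n, c (x + ((2*k+2 : ℕ) : ZMod n)) = c x := by
      intro x
      have e1 : x + ((2*k+2 : ℕ) : ZMod n) = (x + ((k+1:ℕ) : ZMod n)) + ((k+1:ℕ) : ZMod n) := by
        rw [← add_nat_add x (k+1) (k+1), (by omega : (k+1) + (k+1) = 2*k+2)]
      rw [e1]
      rcases fin2_cases (c (x + ((k+1:ℕ):ZMod n))) (c x)
        (c ((x + ((k+1:ℕ):ZMod n)) + ((k+1:ℕ):ZMod n))) (hap x) with h | h
      · exact absurd h (hap _)
      · exact h
    have hstep : ∀ (t : ℕ) (x : ZMod n), c (x + (((2*k+2) * t : ℕ) : ZMod n)) = c x := by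
      intro t
      induction t with
      | zero => intro x; simp
      | succ i ih =>
        intro x
        have e1 : (2*k+2) * (i+1) = (2*k+2)*i + (2*k+2) := by ring
        rw [e1, add_nat_add x ((2*k+2)*i) (2*k+2), h2per, ih]
    rcases Nat.even_or_odd k with hke | hko
    · -- k even : c has period 2, monochromatic C4
      obtain ⟨j, hj⟩ := hke
      have hj1 : 1 ≤ j := by omega
      have hcast2 : (((2*k+2) * 3 : ℕ) : ZMod n) = ((2 : ℕ) : ZMod n) := by
        have e1 : (2*k+2) * 3 = n * 2 + 2 := by rw [hn32]; ring
        rw [e1]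
        push_cast [ZMod.natCast_self]
        ring
      have h2 : ∀ x : ZMod n, c (x + ((2 : ℕ) : ZMod n)) = c x := by
        intro x
        have := hstep 3 x
        rwa [hcast2] at this
      have heven : ∀ (t : ℕ) (x : ZMod n), c (x + ((2 * t : ℕ) : ZMod n)) = c x := by
        intro t
        induction t with
        | zero => intro x; simp
        | succ i ih =>
          intro x
          have e1 : 2 * (i+1) = 2*i + 2 := by ring
          rw [e1, add_nat_add x (2*i) 2, h2, ih]
      refine hc _ (c4_biclique hk2 hn32 (0 : ZMod n)) ⟨c 0, ?_⟩
      rintro v (rfl | rfl | rfl | rfl)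
      · rfl
      · have := heven 1 (0 : ZMod n); norm_num at this ⊢; exact this
      · have := heven (j+1) (0 : ZMod n)
        rw [(by omega : 2 * (j+1) = k + 2)] at this
        exact this
      · have := heven (2*j+1) (0 : ZMod n)
        rw [(by omega : 2 * (2*j+1) = 2*k + 2)] at this
        exact this
    · -- k odd : c constant, contradiction with boundary
      obtain ⟨j, hj⟩ := hko
      have hcast1 : (((2*k+2) * (9*j+9) : ℕ) : ZMod n) = ((1 : ℕ) : ZMod n) := by
        have e1 : (2*k+2) * (9*j+9) = n * (6*j+7) + 1 := by rw [hn32, hj]; ring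
        rw [e1]
        push_cast [ZMod.natCast_self]
        ring
      obtain ⟨y, hy⟩ := hb
      apply hy
      have := hstep (9*j+9) y
      rwa [hcast1] at this
  · -- n ≥ 3k + 3 : use reach k+2
    obtain ⟨x, hx⟩ := id hb
    have hxbd : IsBd c x := hx
    have h1 : c (x + ((k+2 : ℕ) : ZMod n)) = c x := by
      have e1 : x + ((k+2 : ℕ) : ZMod n) = (x + ((1:ℕ) : ZMod n)) + ((k+1:ℕ) : ZMod n) := by
        rw [← add_nat_add x 1 (k+1), (by omega : 1 + (k+1) = k+2)]
      rcases fin2_cases (c (x + ((1:ℕ):ZMod n))) (c x) (c (x + ((k+2:ℕ):ZMod n))) hxbd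
        with h | h
      · exfalso; rw [e1] at h; exact hap _ h
      · exact h
    have hmid2 : ∀ s, 2 ≤ s → s ≤ k → c (x + (s : ℕ)) ≠ c x := by
      intro s hs1 hs2 hcon
      exact good hk hn c hc x (by omega : k+1 ≤ k+2) (by omega) (by omega) hs2 h1 hcon
    -- all of x+1 .. x+k+1 have colour ≠ c x, hence no boundary in between
    have hrun : ∀ s, 1 ≤ s → s ≤ k + 1 → c (x + (s : ℕ)) = c (x + ((1:ℕ) : ZMod n)) := by
      intro s h1' h2'
      rcases (by omega : s = 1 ∨ (2 ≤ s ∧ s ≤ k) ∨ s = k + 1) with rfl | ⟨ha, hb'⟩ | rfl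
      · rfl
      · rcases fin2_cases (c (x + ((1:ℕ):ZMod n))) (c x) (c (x + ((s:ℕ):ZMod n))) hxbd
          with h | h
        · exact h
        · exact absurd h (hmid2 s ha hb')
      · rcases fin2_cases (c (x + ((1:ℕ):ZMod n))) (c x) (c (x + ((k+1:ℕ):ZMod n))) hxbd
          with h | h
        · exact h
        · exact absurd h (hap x)
    have hgx : gp c hb x ≤ k - 1 := all_short hk hn c hc hb h0 h0s x hxbd
    have hbd : IsBd c (x + ((gp c hb x : ℕ) : ZMod n)) := gp_bd c hb x
    apply hbd
    rw [← add_nat_add x (gp c hb x) 1]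
    have hga := hrun (gp c hb x) (gp_pos c hb x) (by omega)
    have hgb := hrun (gp c hb x + 1) (by omega) (by omega)
    rw [hga, hgb]
lemma bd_card_even : Even (Finset.univ.filter (IsBd c)).card := by
  have key : ∀ a b : Fin 2, ((a.val : ZMod 2) - (b.val : ZMod 2)) = if a ≠ b then 1 else 0 := by
    decide
  have hsum : ∑ y : ZMod n, (((c (y + ((1:ℕ):ZMod n))).val : ZMod 2) - ((c y).val : ZMod 2))
      = 0 := by
    rw [Finset.sum_sub_distrib]
    have heq := Equiv.sum_comp (Equiv.addRight (((1:ℕ) : ZMod n))) (fun z => ((c z).val : ZMod 2))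
    simp only [Equiv.coe_addRight] at heq
    rw [heq, sub_self]
  have hsum2 : ∑ y : ZMod n, (if IsBd c y then (1 : ZMod 2) else 0) = 0 := by
    have hcongr : (∑ y : ZMod n, (if IsBd c y then (1 : ZMod 2) else 0))
        = ∑ y : ZMod n, (((c (y + ((1:ℕ):ZMod n))).val : ZMod 2) - ((c y).val : ZMod 2)) := by
      apply Finset.sum_congr rfl
      intro y _
      rw [key]
      rfl
    rw [hcongr, hsum]
  rw [Finset.sum_boole] at hsum2
  have hdvd : (2 : ℕ) ∣ (Finset.univ.filter (IsBd c)).card :=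
    (ZMod.natCast_eq_zero_iff _ 2).mp hsum2
  exact even_iff_two_dvd.mpr hdvd

lemma prev_exists (hb : ∃ y, IsBd c y) (y : ZMod n) :
    ∃ t, 0 < t ∧ IsBd c (y - ((t : ℕ) : ZMod n)) := by
  obtain ⟨x₀, hx₀⟩ := hb
  by_cases hxy : x₀ = y
  · exact ⟨n, NeZero.pos n, by rw [ZMod.natCast_self, sub_zero]; exact hxy ▸ hx₀⟩
  · refine ⟨(y - x₀).val, ?_, ?_⟩
    · have h0 : y - x₀ ≠ 0 := sub_ne_zero.mpr (Ne.symm hxy)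
      have h1 : (y - x₀).val ≠ 0 := fun hz => h0 ((ZMod.val_eq_zero _).mp hz)
      omega
    · have : y - (((y - x₀).val : ℕ) : ZMod n) = x₀ := by
        rw [ZMod.natCast_val, ZMod.cast_id]; ring
      rw [this]; exact hx₀

noncomputable def pb (hb : ∃ y, IsBd c y) (y : ZMod n) : ZMod n :=
  y - ((Nat.find (prev_exists c hb y) : ℕ) : ZMod n)

lemma pb_bd (hb) (y : ZMod n) : IsBd c (pb c hb y) := (Nat.find_spec (prev_exists c hb y)).2

include hk hn hc in
lemma fiber_eq (hb) (x : ZMod n) (hx : IsBd c x) :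
    Finset.univ.filter (fun y => pb c hb y = x)
      = (Finset.Icc 1 (gp c hb x)).image (fun j => x + ((j : ℕ) : ZMod n)) := by
  have hgpk : gp c hb x ≤ k + 1 := gap_le hk hn c hc hb x
  ext y
  simp only [Finset.mem_filter, Finset.mem_univ, true_and, Finset.mem_image, Finset.mem_Icc]
  constructor
  · intro hpb
    set u := Nat.find (prev_exists c hb y) with hudef
    obtain ⟨hupos, hubd⟩ := Nat.find_spec (prev_exists c hb y)
    have hyx : y = x + ((u : ℕ) : ZMod n) := by
      have : y - ((u : ℕ) : ZMod n) = x := hpb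
      rw [← this]; ring
    have hug : u ≤ gp c hb x := by
      by_contra hcon
      have hgbd : IsBd c (x + ((gp c hb x : ℕ) : ZMod n)) := gp_bd c hb x
      have harith : x + ((gp c hb x : ℕ) : ZMod n) = y - (((u - gp c hb x : ℕ) : ℕ) : ZMod n) := by
        rw [hyx]
        push_cast [Nat.cast_sub (by omega : gp c hb x ≤ u)]
        ring
      rw [harith] at hgbd
      exact Nat.find_min (prev_exists c hb y) (show u - gp c hb x < u by
        have := gp_pos c hb x; omega) ⟨by have := gp_pos c hb x; omega, hgbd⟩
    exact ⟨u, ⟨hupos, hug⟩, hyx.symm⟩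
  · rintro ⟨j, ⟨hj1, hjg⟩, rfl⟩
    set y := x + ((j : ℕ) : ZMod n) with hydef
    have hsub : y - ((j : ℕ) : ZMod n) = x := by rw [hydef]; ring
    have hle : Nat.find (prev_exists c hb y) ≤ j :=
      Nat.find_min' _ ⟨by omega, by rw [hsub]; exact hx⟩
    have hnlt : ¬ (Nat.find (prev_exists c hb y) < j) := by
      intro hlt
      set u := Nat.find (prev_exists c hb y) with hudef
      obtain ⟨hupos, hubd⟩ := Nat.find_spec (prev_exists c hb y)
      have harith : y - ((u : ℕ) : ZMod n) = x + (((j - u : ℕ) : ℕ) : ZMod n) := by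
        rw [hydef]
        push_cast [Nat.cast_sub (le_of_lt hlt)]
        ring
      rw [harith] at hubd
      exact gp_min c hb x (by omega) (by omega) hubd
    have hju : Nat.find (prev_exists c hb y) = j := by omega
    show y - _ = x
    rw [hju, hsub]

include hk hn hc in
lemma sum_gp (hb) :
    ∑ x ∈ Finset.univ.filter (IsBd c), gp c hb x = n := by
  have hfib := Finset.card_eq_sum_card_fiberwise
    (f := pb c hb) (s := Finset.univ) (t := Finset.univ.filter (IsBd c))
    (fun y _ => Finset.mem_filter.mpr ⟨Finset.mem_univ _, pb_bd c hb y⟩)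
  rw [Finset.card_univ, ZMod.card] at hfib
  refine Eq.trans ?_ hfib.symm
  apply Finset.sum_congr rfl
  intro x hxmem
  have hx : IsBd c x := (Finset.mem_filter.mp hxmem).2
  rw [fiber_eq hk hn c hc hb x hx]
  rw [Finset.card_image_of_injOn, Nat.card_Icc]
  · omega
  · intro j hj j' hj' hEq
    simp only [Finset.coe_Icc, Set.mem_Icc] at hj hj'
    have hgpk : gp c hb x ≤ k + 1 := gap_le hk hn c hc hb x
    have h1 : ((j : ℕ) : ZMod n) = ((j' : ℕ) : ZMod n) := add_left_cancel hEq
    have := congrArg ZMod.val h1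
    rw [ZMod.val_natCast, ZMod.val_natCast,
      Nat.mod_eq_of_lt (by omega), Nat.mod_eq_of_lt (by omega)] at this
    exact this

include hk hn hc in
lemma runs_give_m : ∃ m, 2 ≤ m ∧ Even m ∧ m * k ≤ n ∧ n ≤ m * (k + 1) := by
  have hb := exists_bd hk hn c hc
  set m := (Finset.univ.filter (IsBd c)).card with hmdef
  have heven : Even m := bd_card_even c
  have hpos : 0 < m := by
    obtain ⟨y, hy⟩ := hb
    exact Finset.card_pos.mpr ⟨y, Finset.mem_filter.mpr ⟨Finset.mem_univ _, hy⟩⟩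
  have hm2 : 2 ≤ m := by
    obtain ⟨t, ht⟩ := heven
    omega
  have hlower : ∀ x ∈ Finset.univ.filter (IsBd c), k ≤ gp c hb x := by
    intro x hxmem
    have hx : IsBd c x := (Finset.mem_filter.mp hxmem).2
    by_contra hcon
    exact no_short hk hn c hc hb ⟨x, hx, by omega⟩
  have hupper : ∀ x ∈ Finset.univ.filter (IsBd c), gp c hb x ≤ k + 1 :=
    fun x _ => gap_le hk hn c hc hb x
  have hsum := sum_gp hk hn c hc hb
  have h1 : m • k ≤ ∑ x ∈ Finset.univ.filter (IsBd c), gp c hb x :=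
    Finset.card_nsmul_le_sum _ _ _ hlower
  have h2 : ∑ x ∈ Finset.univ.filter (IsBd c), gp c hb x ≤ m • (k+1) :=
    Finset.sum_le_card_nsmul _ _ _ hupper
  rw [smul_eq_mul] at h1 h2
  exact ⟨m, hm2, heven, by omega, by omega⟩
end runs

/-- `C_n^k` with `n ≥ 3k + 2` and `k ≥ 1` has biclique-chromatic number 2 iff
`n = a·k + b·(k + 1)` for naturals `a`, `b` with `a + b ≥ 2` even. -/
theorem stmt_16 (n k : ℕ) (hk : 1 ≤ k) (h : 3 * k + 2 ≤ n) :
    bicliqueChromaticNumber (cyclePower n k) = 2 ↔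
      ∃ a b : ℕ, n = a * k + b * (k + 1) ∧ 2 ≤ a + b ∧ Even (a + b) := by
  haveI : NeZero n := ⟨by omega⟩
  constructor
  · intro h2eq
    have hne : {m | BicliqueColorable (cyclePower n k) m}.Nonempty := by
      by_contra hcon
      rw [Set.not_nonempty_iff_eq_empty] at hcon
      unfold bicliqueChromaticNumber at h2eq
      rw [hcon, Nat.sInf_empty] at h2eq
      exact absurd h2eq (by norm_num)
    have hmem := Nat.sInf_mem hne
    unfold bicliqueChromaticNumber at h2eq
    rw [h2eq] at hmem
    obtain ⟨c, hc⟩ := hmem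
    obtain ⟨m, hm2, hme, h1, h2⟩ := runs_give_m hk h c hc
    have hmk : m * (k+1) = m * k + m := by ring
    refine ⟨m * (k+1) - n, n - m * k, ?_, by omega, ?_⟩
    · have goalZ : ((m*(k+1) - n) * k + (n - m*k) * (k+1) : ℕ) = n := by
        zify [h1, h2]
        ring
      exact goalZ.symm
    · have heq : m*(k+1) - n + (n - m*k) = m := by omega
      rw [heq]
      exact hme
  · rintro ⟨a, b, hab, hab2, habe⟩
    set m := a + b with hmdef
    have h1 : m * k ≤ n := by rw [hab, hmdef]; nlinarith
    have h2 : n ≤ m * (k+1) := by rw [hab, hmdef]; nlinarith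
    have hcol2 : BicliqueColorable (cyclePower n k) 2 :=
      two_colorable hk h hab2 habe (by rw [mul_comm]; exact h1) h2
    have h0 : ¬ BicliqueColorable (cyclePower n k) 0 := by
      rintro ⟨c, -⟩
      exact (c 0).elim0
    have h1' : ¬ BicliqueColorable (cyclePower n k) 1 := by
      rintro ⟨c, hcc⟩
      have hbic := p3_biclique hk h (0 : ZMod n) (le_refl (k+1)) (by omega)
        (by omega : k + 1 ≤ 1 + k) hk
      exact hcc _ hbic ⟨c 0, fun v _ => Subsingleton.elim _ _⟩
    unfold bicliqueChromaticNumber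
    apply le_antisymm
    · exact Nat.sInf_le hcol2
    · by_contra hcon
      push_neg at hcon
      have hmem := Nat.sInf_mem (⟨2, hcol2⟩ : {m | BicliqueColorable (cyclePower n k) m}.Nonempty)
      rcases (by omega : sInf {m | BicliqueColorable (cyclePower n k) m} = 0 ∨
          sInf {m | BicliqueColorable (cyclePower n k) m} = 1) with hv | hv
      · rw [hv] at hmem; exact h0 hmem
      · rw [hv] at hmem; exact h1' hmem
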